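/- Let T_{p,q,r} (with p,q,r ≥ 2) be the tree with three arms of lengths p-1, q-1, r-1 attached to a central vertex, with n = p+q+r-2 vertices, and let A(T_{p,q,r}) be its generalized Cartan matrix (A_{ii} = 2, A_{ij} = -1 if i and j are adjacent, A_{ij} = 0 otherwise). Then the quadratic form associated to A(T_{p,q,r}) is positive definite if and only if 1/p + 1/q + 1/r > 1. -/
import Mathlib


/-!
STATEMENT 3: The quadratic form of the generalized Cartan matrix of the
three-armed tree `T_{p,q,r}` is positive definite iff `1/p + 1/q + 1/r > 1`.
-/

/-- Adjacency (as a `Bool`) of the tree `T_{p,q,r}`, whose vertices are indexed by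
`0, 1, …, p+q+r-3`:  vertex `0` is the central vertex `u`; vertices `1, …, p-1`
form the first arm `x₁, …, x_{p-1}`; vertices `p, …, p+q-2` form the second arm
`y₁, …, y_{q-1}`; vertices `p+q-1, …, p+q+r-3` form the third arm `z₁, …, z_{r-1}`. -/
def tpqrAdjAux (p q r i j : ℕ) : Bool :=
  ((i == 0) && ((j == 1) || (j == p) || (j == p + q - 1))) ||
  ((1 ≤ i) && (i ≤ p - 2) && (j == i + 1)) ||
  ((p ≤ i) && (i ≤ p + q - 3) && (j == i + 1)) ||
  ((p + q - 1 ≤ i) && (i ≤ p + q + r - 4) && (j == i + 1))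

/-- Symmetrized adjacency of `T_{p,q,r}`. -/
def tpqrAdj (p q r i j : ℕ) : Bool :=
  tpqrAdjAux p q r i j || tpqrAdjAux p q r j i

/-- The generalized Cartan matrix `A(T_{p,q,r})`: `2` on the diagonal, `-1` between
adjacent vertices of the tree `T_{p,q,r}`, and `0` otherwise. -/
def cartanT (p q r : ℕ) : Matrix (Fin (p + q + r - 2)) (Fin (p + q + r - 2)) ℤ :=
  fun i j => if i = j then 2 else if tpqrAdj p q r i j then -1 else 0

open Finset

lemma arm_id (m : ℕ) (b : ℕ → ℝ) :
    ∑ k ∈ range m, (2*(b (k+1))^2 - 2*b k*b (k+1))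
    = (∑ k ∈ range m, ((m-k+1:ℕ):ℝ)/((m-k:ℕ):ℝ)
        * (b (k+1) - ((m-k:ℕ):ℝ)/((m-k+1:ℕ):ℝ) * b k)^2)
      - (m:ℝ)/(m+1) * (b 0)^2 := by
  induction m generalizing b with
  | zero => simp
  | succ m ih =>
    rw [Finset.sum_range_succ' (fun k => 2*(b (k+1))^2 - 2*b k*b (k+1)) m,
        Finset.sum_range_succ' (fun k => ((m+1-k+1:ℕ):ℝ)/((m+1-k:ℕ):ℝ)
          * (b (k+1) - ((m+1-k:ℕ):ℝ)/((m+1-k+1:ℕ):ℝ) * b k)^2) m]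
    simp only [Nat.succ_sub_succ, Nat.sub_zero]
    rw [ih (fun k => b (k+1))]
    have h1 : ((m:ℝ)+1) ≠ 0 := by positivity
    have h2 : ((m:ℝ)+2) ≠ 0 := by positivity
    push_cast
    field_simp
    ring

lemma tpqr_aux_iff (a b c i j : ℕ) :
    tpqrAdjAux (a+2) (b+2) (c+2) i j = true ↔
      (i = 0 ∧ j = 1) ∨ (i = 0 ∧ j = a+2) ∨ (i = 0 ∧ j = a+b+3) ∨
      (1 ≤ i ∧ i ≤ a ∧ j = i+1) ∨ (a+2 ≤ i ∧ i ≤ a+b+1 ∧ j = i+1) ∨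
      (a+b+3 ≤ i ∧ i ≤ a+b+c+2 ∧ j = i+1) := by
  simp only [tpqrAdjAux, Bool.or_eq_true, Bool.and_eq_true, beq_iff_eq,
    decide_eq_true_eq]
  omega

lemma aux_lt {a b c i j : ℕ} (h : tpqrAdjAux (a+2) (b+2) (c+2) i j = true) : i < j := by
  rw [tpqr_aux_iff] at h; omega

lemma ite_or_add {P Q : Prop} [Decidable P] [Decidable Q] (h : ¬(P ∧ Q)) (x : ℝ) :
    (if P ∨ Q then x else 0) = (if P then x else 0) + (if Q then x else 0) := by
  by_cases hP : P <;> by_cases hQ : Q <;> simp_all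


lemma double_ite_sum (N : ℕ) (C : ℕ → Prop) [DecidablePred C] (t : ℕ → ℕ) (f : ℕ → ℕ → ℝ)
    (ht : ∀ i, C i → t i < N) :
    ∑ i ∈ range N, ∑ j ∈ range N, (if C i ∧ j = t i then f i j else 0)
    = ∑ i ∈ range N, (if C i then f i (t i) else 0) := by
  refine sum_congr rfl fun i _ => ?_
  by_cases h : C i
  · simp only [h, true_and, if_true]
    rw [Finset.sum_ite_eq' (range N) (t i) (f i), if_pos (mem_range.2 (ht i h))]
  · rw [if_neg h]
    exact Finset.sum_eq_zero fun j _ => by rw [if_neg (by tauto)]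

lemma interval_ite_sum (N lo hi : ℕ) (g : ℕ → ℝ) :
    ∑ i ∈ range N, (if lo ≤ i ∧ i ≤ hi then g i else 0)
    = ∑ i ∈ (range N).filter (fun i => lo ≤ i ∧ i ≤ hi), g i := by
  rw [Finset.sum_filter]

lemma decomp1 (a b c : ℕ) (w : ℕ → ℝ) :
    ∑ i ∈ range (a+b+c+4), ∑ j ∈ range (a+b+c+4), (w i *
      (if i = j then (2:ℝ) else if tpqrAdj (a+2) (b+2) (c+2) i j then -1 else 0) * w j)
    = (∑ i ∈ range (a+b+c+4), 2*(w i)^2)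
      - 2*(w 0 * w 1 + w 0 * w (a+2) + w 0 * w (a+b+3)
        + (∑ k ∈ range a, w (1+k) * w (1+k+1))
        + (∑ k ∈ range b, w (a+2+k) * w (a+2+k+1))
        + (∑ k ∈ range c, w (a+b+3+k) * w (a+b+3+k+1))) := by
  set N := a+b+c+4 with hN
  have key : ∀ i j : ℕ, (w i *
      (if i = j then (2:ℝ) else if tpqrAdj (a+2) (b+2) (c+2) i j then -1 else 0) * w j)
      = (if i = j then 2*(w i)^2 else 0)
        - (if tpqrAdjAux (a+2) (b+2) (c+2) i j = true then w i * w j else 0)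
        - (if tpqrAdjAux (a+2) (b+2) (c+2) j i = true then w i * w j else 0) := by
    intro i j
    rw [tpqrAdj]
    by_cases h3 : i = j
    · subst h3
      have h1 : ¬ (tpqrAdjAux (a+2) (b+2) (c+2) i i = true) :=
        fun h => absurd (aux_lt h) (lt_irrefl i)
      rw [if_pos rfl, if_pos rfl, if_neg h1]; ring
    · rw [if_neg h3, if_neg h3]
      by_cases h1 : tpqrAdjAux (a+2) (b+2) (c+2) i j = true <;>
        by_cases h2 : tpqrAdjAux (a+2) (b+2) (c+2) j i = true
      · have := aux_lt h1; have := aux_lt h2; omega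
      · rw [if_pos (by simp [h1]), if_pos h1, if_neg h2]; ring
      · rw [if_pos (by simp [h2]), if_neg h1, if_pos h2]; ring
      · rw [if_neg (by simp [h1, h2]), if_neg h1, if_neg h2]; ring
  simp only [key, Finset.sum_sub_distrib]
  have hS0 : ∑ i ∈ range N, ∑ j ∈ range N, (if i = j then 2*(w i)^2 else 0)
      = ∑ i ∈ range N, 2*(w i)^2 := by
    refine sum_congr rfl fun i hi => ?_
    rw [Finset.sum_eq_single i (fun j _ hji => by rw [if_neg (Ne.symm hji)])
      (fun h => absurd hi h), if_pos rfl]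
  have split : ∀ i j : ℕ, (if tpqrAdjAux (a+2) (b+2) (c+2) i j = true then w i * w j else 0)
      = (if (i = 0) ∧ j = 1 then w i * w j else 0)
      + (if (i = 0) ∧ j = a+2 then w i * w j else 0)
      + (if (i = 0) ∧ j = a+b+3 then w i * w j else 0)
      + (if (1 ≤ i ∧ i ≤ a) ∧ j = i+1 then w i * w j else 0)
      + (if (a+2 ≤ i ∧ i ≤ a+b+1) ∧ j = i+1 then w i * w j else 0)
      + (if (a+b+3 ≤ i ∧ i ≤ a+b+c+2) ∧ j = i+1 then w i * w j else 0) := by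
    intro i j
    simp only [tpqr_aux_iff, ← and_assoc]
    rw [ite_or_add (by omega), ite_or_add (by omega), ite_or_add (by omega),
      ite_or_add (by omega), ite_or_add (by omega)]
    ring
  have hD : ∑ i ∈ range N, ∑ j ∈ range N,
      (if tpqrAdjAux (a+2) (b+2) (c+2) i j = true then w i * w j else 0)
      = w 0 * w 1 + w 0 * w (a+2) + w 0 * w (a+b+3)
        + (∑ k ∈ range a, w (1+k) * w (1+k+1))
        + (∑ k ∈ range b, w (a+2+k) * w (a+2+k+1))
        + (∑ k ∈ range c, w (a+b+3+k) * w (a+b+3+k+1)) := by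
    simp only [split, Finset.sum_add_distrib]
    rw [double_ite_sum N _ (fun _ => 1) _ (fun i h => by show 1 < N; omega),
        double_ite_sum N _ (fun _ => a+2) _ (fun i h => by show a+2 < N; omega),
        double_ite_sum N _ (fun _ => a+b+3) _ (fun i h => by show a+b+3 < N; omega),
        double_ite_sum N _ (fun i => i+1) _ (fun i h => by show i+1 < N; omega),
        double_ite_sum N _ (fun i => i+1) _ (fun i h => by show i+1 < N; omega),
        double_ite_sum N _ (fun i => i+1) _ (fun i h => by show i+1 < N; omega)]
    congr 1
    congr 1
    congr 1
    congr 1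
    congr 1
    · rw [Finset.sum_ite_eq' (range N) 0 (fun i => w i * w 1), if_pos (by simp [hN])]
    · rw [Finset.sum_ite_eq' (range N) 0 (fun i => w i * w (a+2)), if_pos (by simp [hN])]
    · rw [Finset.sum_ite_eq' (range N) 0 (fun i => w i * w (a+b+3)), if_pos (by simp [hN])]
    · rw [← Finset.sum_filter (fun i => 1 ≤ i ∧ i ≤ a) (fun i => w i * w (i+1))]
      rw [show (range N).filter (fun i => 1 ≤ i ∧ i ≤ a) = Finset.Ico 1 (a+1) by
        ext x; simp [mem_Ico, mem_range, hN]; omega]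
      rw [Finset.sum_Ico_eq_sum_range]
      simp
    · rw [← Finset.sum_filter (fun i => a+2 ≤ i ∧ i ≤ a+b+1) (fun i => w i * w (i+1))]
      rw [show (range N).filter (fun i => a+2 ≤ i ∧ i ≤ a+b+1) = Finset.Ico (a+2) (a+b+2) by
        ext x; simp [mem_Ico, mem_range, hN]; omega]
      rw [Finset.sum_Ico_eq_sum_range]
      simp [show a+b+2-(a+2) = b from by omega]
    · rw [← Finset.sum_filter (fun i => a+b+3 ≤ i ∧ i ≤ a+b+c+2) (fun i => w i * w (i+1))]
      rw [show (range N).filter (fun i => a+b+3 ≤ i ∧ i ≤ a+b+c+2) = Finset.Ico (a+b+3) (a+b+c+3) by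
        ext x; simp [mem_Ico, mem_range, hN]; omega]
      rw [Finset.sum_Ico_eq_sum_range]
      simp [show a+b+c+3-(a+b+3) = c from by omega]
  have hD' : ∑ i ∈ range N, ∑ j ∈ range N,
      (if tpqrAdjAux (a+2) (b+2) (c+2) j i = true then w i * w j else 0)
      = w 0 * w 1 + w 0 * w (a+2) + w 0 * w (a+b+3)
        + (∑ k ∈ range a, w (1+k) * w (1+k+1))
        + (∑ k ∈ range b, w (a+2+k) * w (a+2+k+1))
        + (∑ k ∈ range c, w (a+b+3+k) * w (a+b+3+k+1)) := by
    rw [Finset.sum_comm]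
    rw [← hD]
    refine sum_congr rfl fun i _ => sum_congr rfl fun j _ => ?_
    rw [mul_comm (w j) (w i)]
  rw [hS0, hD, hD']
  ring

def armW (w : ℕ → ℝ) (off : ℕ) (k : ℕ) : ℝ := if k = 0 then w 0 else w (off + k)

lemma decomp2 (a b c : ℕ) (w : ℕ → ℝ) :
    (∑ i ∈ range (a+b+c+4), 2*(w i)^2)
      - 2*(w 0 * w 1 + w 0 * w (a+2) + w 0 * w (a+b+3)
        + (∑ k ∈ range a, w (1+k) * w (1+k+1))
        + (∑ k ∈ range b, w (a+2+k) * w (a+2+k+1))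
        + (∑ k ∈ range c, w (a+b+3+k) * w (a+b+3+k+1)))
    = (∑ k ∈ range (a+1), (2*(w (k+1))^2 - 2*w k*w (k+1)))
    + (∑ k ∈ range (b+1), (2*(armW w (a+1) (k+1))^2 - 2*armW w (a+1) k*armW w (a+1) (k+1)))
    + (∑ k ∈ range (c+1), (2*(armW w (a+b+2) (k+1))^2 - 2*armW w (a+b+2) k*armW w (a+b+2) (k+1)))
    + 2*(w 0)^2 := by
  have h1 : (∑ i ∈ range (a+b+c+4), 2*(w i)^2)
      = 2*(w 0)^2 + (∑ k ∈ range (a+1), 2*(w (k+1))^2)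
        + (∑ k ∈ range (b+1), 2*(w (a+2+k))^2)
        + (∑ k ∈ range (c+1), 2*(w (a+b+3+k))^2) := by
    have ea : ∑ k ∈ range (a+2), 2*(w k)^2 = 2*(w 0)^2 + ∑ k ∈ range (a+1), 2*(w (k+1))^2 := by
      rw [show a+2 = a+1+1 from by omega, Finset.sum_range_succ']; ring
    rw [show a+b+c+4 = (a+2)+((b+1)+(c+1)) from by omega, Finset.sum_range_add,
        Finset.sum_range_add (fun x => 2*(w (a+2+x))^2) (b+1) (c+1), ea]
    simp only [show ∀ x, a+2+(b+1+x) = a+b+3+x from fun x => by omega]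
    ring
  have h2 : (∑ k ∈ range (a+1), (2*(w (k+1))^2 - 2*w k*w (k+1)))
      = (∑ k ∈ range (a+1), 2*(w (k+1))^2)
        - (2*(w 0 * w 1) + 2*(∑ k ∈ range a, w (1+k) * w (1+k+1))) := by
    rw [Finset.sum_sub_distrib, Finset.sum_range_succ' (fun k => 2*w k*w (k+1)) a,
        Finset.mul_sum]
    simp only [show ∀ k:ℕ, 1+k = k+1 from fun k => Nat.add_comm 1 k]
    rw [Finset.sum_congr rfl (fun k _ => show 2*w (k+1)*w (k+1+1) = 2*(w (k+1) * w (k+1+1)) from by ring)]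
    ring
  have h3 : (∑ k ∈ range (b+1), (2*(armW w (a+1) (k+1))^2 - 2*armW w (a+1) k*armW w (a+1) (k+1)))
      = (∑ k ∈ range (b+1), 2*(w (a+2+k))^2)
        - (2*(w 0 * w (a+2)) + 2*(∑ k ∈ range b, w (a+2+k) * w (a+2+k+1))) := by
    simp only [armW, Nat.succ_ne_zero, if_false,
      show ∀ k:ℕ, a+1+(k+1) = a+2+k from fun k => by omega]
    rw [Finset.sum_sub_distrib,
        Finset.sum_range_succ' (fun k => 2*(if k = 0 then w 0 else w (a+1+k))*w (a+2+k)) b,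
        Finset.mul_sum]
    simp only [Nat.succ_ne_zero, if_false, reduceIte, add_zero,
      show ∀ k:ℕ, a+1+(k+1) = a+2+k from fun k => by omega,
      show ∀ k:ℕ, a+2+(k+1) = a+2+k+1 from fun k => by omega]
    rw [Finset.sum_congr rfl (fun k _ => show 2*w (a+2+k)*w (a+2+k+1) = 2*(w (a+2+k) * w (a+2+k+1)) from by ring)]
    ring
  have h4 : (∑ k ∈ range (c+1), (2*(armW w (a+b+2) (k+1))^2 - 2*armW w (a+b+2) k*armW w (a+b+2) (k+1)))
      = (∑ k ∈ range (c+1), 2*(w (a+b+3+k))^2)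
        - (2*(w 0 * w (a+b+3)) + 2*(∑ k ∈ range c, w (a+b+3+k) * w (a+b+3+k+1))) := by
    simp only [armW, Nat.succ_ne_zero, if_false,
      show ∀ k:ℕ, a+b+2+(k+1) = a+b+3+k from fun k => by omega]
    rw [Finset.sum_sub_distrib,
        Finset.sum_range_succ' (fun k => 2*(if k = 0 then w 0 else w (a+b+2+k))*w (a+b+3+k)) c,
        Finset.mul_sum]
    simp only [Nat.succ_ne_zero, if_false, reduceIte, add_zero,
      show ∀ k:ℕ, a+b+2+(k+1) = a+b+3+k from fun k => by omega,
      show ∀ k:ℕ, a+b+3+(k+1) = a+b+3+k+1 from fun k => by omega]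
    rw [Finset.sum_congr rfl (fun k _ => show 2*w (a+b+3+k)*w (a+b+3+k+1) = 2*(w (a+b+3+k) * w (a+b+3+k+1)) from by ring)]
    ring
  rw [h1, h2, h3, h4]
  ring

lemma qform (a b c : ℕ) (w : ℕ → ℝ) :
    ∑ i ∈ range (a+b+c+4), ∑ j ∈ range (a+b+c+4), (w i *
      (if i = j then (2:ℝ) else if tpqrAdj (a+2) (b+2) (c+2) i j then -1 else 0) * w j)
    = (∑ k ∈ range (a+1), ((a+1-k+1:ℕ):ℝ)/((a+1-k:ℕ):ℝ)
        * (w (k+1) - ((a+1-k:ℕ):ℝ)/((a+1-k+1:ℕ):ℝ) * w k)^2)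
    + (∑ k ∈ range (b+1), ((b+1-k+1:ℕ):ℝ)/((b+1-k:ℕ):ℝ)
        * (armW w (a+1) (k+1) - ((b+1-k:ℕ):ℝ)/((b+1-k+1:ℕ):ℝ) * armW w (a+1) k)^2)
    + (∑ k ∈ range (c+1), ((c+1-k+1:ℕ):ℝ)/((c+1-k:ℕ):ℝ)
        * (armW w (a+b+2) (k+1) - ((c+1-k:ℕ):ℝ)/((c+1-k+1:ℕ):ℝ) * armW w (a+b+2) k)^2)
    + ((1:ℝ)/(a+2) + 1/(b+2) + 1/(c+2) - 1) * (w 0)^2 := by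
  rw [decomp1, decomp2]
  have e1 := arm_id (a+1) w
  have e2 := arm_id (b+1) (armW w (a+1))
  have e3 := arm_id (c+1) (armW w (a+b+2))
  rw [e1, e2, e3]
  have h0 : armW w (a+1) 0 = w 0 := by simp [armW]
  have h0' : armW w (a+b+2) 0 = w 0 := by simp [armW]
  rw [h0, h0']
  have ha : ((a:ℝ)+1+1) ≠ 0 := by positivity
  have hb : ((b:ℝ)+1+1) ≠ 0 := by positivity
  have hc : ((c:ℝ)+1+1) ≠ 0 := by positivity
  push_cast
  field_simp
  ring

lemma arm_zero (m : ℕ) (s : ℕ → ℝ) (h0 : s 0 = 0)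
    (hz : ∑ k ∈ range m, ((m-k+1:ℕ):ℝ)/((m-k:ℕ):ℝ)
      * (s (k+1) - ((m-k:ℕ):ℝ)/((m-k+1:ℕ):ℝ) * s k)^2 = 0) :
    ∀ k, k ≤ m → s k = 0 := by
  have hterm : ∀ k, k < m → s (k+1) = ((m-k:ℕ):ℝ)/((m-k+1:ℕ):ℝ) * s k := by
    intro k hk
    have hz' := (Finset.sum_eq_zero_iff_of_nonneg (fun k _ => by positivity)).1 hz k
      (mem_range.2 hk)
    have hmk : 1 ≤ m - k := by omega
    have hpos : (0:ℝ) < ((m-k:ℕ):ℝ) := by exact_mod_cast hmk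
    have hco : 0 < ((m-k+1:ℕ):ℝ)/((m-k:ℕ):ℝ) := by
      apply div_pos _ hpos; positivity
    have hsq := (mul_eq_zero.1 hz').resolve_left (ne_of_gt hco)
    have := pow_eq_zero_iff (n := 2) (by norm_num) |>.1 hsq
    linarith [sub_eq_zero.1 this]
  intro k
  induction k with
  | zero => exact fun _ => h0
  | succ k ih =>
    intro hk
    rw [hterm k (by omega), ih (by omega), mul_zero]

lemma conv_sum (a b c : ℕ) (v : Fin (a+2+(b+2)+(c+2)-2) → ℝ) (w : ℕ → ℝ)
    (hvw : ∀ i : Fin (a+2+(b+2)+(c+2)-2), v i = w ↑i) :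
    ∑ i, ∑ j, (v i * ((cartanT (a+2) (b+2) (c+2) i j : ℤ):ℝ) * v j)
    = ∑ i ∈ range (a+b+c+4), ∑ j ∈ range (a+b+c+4),
        (w i * (if i = j then (2:ℝ) else if tpqrAdj (a+2) (b+2) (c+2) i j then -1 else 0) * w j) := by
  have hn : a+2+(b+2)+(c+2)-2 = a+b+c+4 := by omega
  rw [← hn]
  have hc : ∀ i j : Fin (a+2+(b+2)+(c+2)-2),
      ((cartanT (a+2) (b+2) (c+2) i j : ℤ):ℝ)
      = (if (i:ℕ) = (j:ℕ) then (2:ℝ) else if tpqrAdj (a+2) (b+2) (c+2) ↑i ↑j then -1 else 0) := by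
    intro i j
    simp only [cartanT]
    by_cases h : i = j
    · simp [h]
    · rw [if_neg h, if_neg (fun hh => h (Fin.ext hh))]
      split <;> norm_num
  have step1 : ∑ i, ∑ j, (v i * ((cartanT (a+2) (b+2) (c+2) i j : ℤ):ℝ) * v j)
      = ∑ i : Fin (a+2+(b+2)+(c+2)-2), ∑ j : Fin (a+2+(b+2)+(c+2)-2),
        (w ↑i * (if (i:ℕ) = (j:ℕ) then (2:ℝ) else if tpqrAdj (a+2) (b+2) (c+2) ↑i ↑j then -1 else 0) * w ↑j) := by
    refine Finset.sum_congr rfl fun i _ => Finset.sum_congr rfl fun j _ => ?_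
    rw [hvw i, hvw j, hc i j]
  rw [step1]
  rw [Fin.sum_univ_eq_sum_range (fun k => ∑ j : Fin (a+2+(b+2)+(c+2)-2),
    (w k * (if k = (j:ℕ) then (2:ℝ) else if tpqrAdj (a+2) (b+2) (c+2) k ↑j then -1 else 0) * w ↑j))]
  refine Finset.sum_congr rfl fun i _ => ?_
  exact Fin.sum_univ_eq_sum_range (fun m =>
    (w i * (if i = m then (2:ℝ) else if tpqrAdj (a+2) (b+2) (c+2) i m then -1 else 0) * w m)) _

theorem cartanT_posDef_iff (p q r : ℕ) (hp : 2 ≤ p) (hq : 2 ≤ q) (hr : 2 ≤ r) :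
    (∀ v : Fin (p + q + r - 2) → ℝ, v ≠ 0 →
      0 < ∑ i, ∑ j, v i * ((cartanT p q r i j : ℤ) : ℝ) * v j) ↔
    1 < (1 : ℝ) / p + 1 / q + 1 / r := by
  obtain ⟨a, rfl⟩ : ∃ a, p = a + 2 := ⟨p - 2, by omega⟩
  obtain ⟨b, rfl⟩ : ∃ b, q = b + 2 := ⟨q - 2, by omega⟩
  obtain ⟨c, rfl⟩ : ∃ c, r = c + 2 := ⟨r - 2, by omega⟩
  have hA : ((a:ℝ)+2) ≠ 0 := by positivity
  have hB : ((b:ℝ)+2) ≠ 0 := by positivity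
  have hC : ((c:ℝ)+2) ≠ 0 := by positivity
  constructor
  · -- positive definite → 1/p+1/q+1/r > 1
    intro hpd
    by_contra hnot
    push_neg at hnot
    push_cast at hnot
    set W : ℕ → ℝ := fun k =>
      if k ≤ a+1 then ((a+2-k:ℕ):ℝ)/((a+2:ℕ):ℝ)
      else if k ≤ a+b+2 then ((a+b+3-k:ℕ):ℝ)/((b+2:ℕ):ℝ)
      else ((a+b+c+4-k:ℕ):ℝ)/((c+2:ℕ):ℝ) with hW
    have hW0 : W 0 = 1 := by
      rw [hW]
      simp only [if_pos (by omega : (0:ℕ) ≤ a+1), Nat.sub_zero]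
      rw [div_self (by positivity)]
    set v : Fin (a+2+(b+2)+(c+2)-2) → ℝ := fun i => W ↑i with hv
    have hvne : v ≠ 0 := by
      intro h
      have h0 : (0:ℕ) < a+2+(b+2)+(c+2)-2 := by omega
      have h1 := congrFun h ⟨0, h0⟩
      simp only [Pi.zero_apply] at h1
      rw [show v ⟨0, h0⟩ = W 0 from rfl, hW0] at h1
      exact one_ne_zero h1
    have hQ := hpd v hvne
    rw [conv_sum a b c v W (fun i => rfl), qform] at hQ
    have s1 : (∑ k ∈ range (a+1), ((a+1-k+1:ℕ):ℝ)/((a+1-k:ℕ):ℝ)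
        * (W (k+1) - ((a+1-k:ℕ):ℝ)/((a+1-k+1:ℕ):ℝ) * W k)^2) = 0 := by
      refine Finset.sum_eq_zero fun k hk => ?_
      rw [mem_range] at hk
      have hstep : W (k+1) = ((a+1-k:ℕ):ℝ)/((a+1-k+1:ℕ):ℝ) * W k := by
        rw [hW]
        simp only [if_pos (by omega : k+1 ≤ a+1), if_pos (by omega : k ≤ a+1)]
        rw [show a+2-(k+1) = a+1-k from by omega, show a+1-k+1 = a+2-k from by omega,
            Nat.cast_sub (by omega : k ≤ a+1), Nat.cast_sub (by omega : k ≤ a+2)]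
        push_cast
        have hk' : (k:ℝ) ≤ a := by exact_mod_cast Nat.lt_succ_iff.1 hk
        have d2 : (a:ℝ)+2-k ≠ 0 := by linarith
        field_simp
      rw [hstep, sub_self]
      simp
    have s2 : (∑ k ∈ range (b+1), ((b+1-k+1:ℕ):ℝ)/((b+1-k:ℕ):ℝ)
        * (armW W (a+1) (k+1) - ((b+1-k:ℕ):ℝ)/((b+1-k+1:ℕ):ℝ) * armW W (a+1) k)^2) = 0 := by
      refine Finset.sum_eq_zero fun k hk => ?_
      rw [mem_range] at hk
      have hstep : armW W (a+1) (k+1) = ((b+1-k:ℕ):ℝ)/((b+1-k+1:ℕ):ℝ) * armW W (a+1) k := by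
        simp only [armW, Nat.succ_ne_zero, if_false]
        by_cases hk0 : k = 0
        · subst hk0
          simp only [if_pos rfl, hW0]
          rw [hW]
          simp only [if_neg (by omega : ¬ a+1+1 ≤ a+1), if_pos (by omega : a+1+1 ≤ a+b+2)]
          rw [Nat.cast_sub (by omega : a+1+1 ≤ a+b+3)]
          push_cast
          field_simp
          ring
        · rw [if_neg hk0, hW]
          simp only [if_neg (by omega : ¬ a+1+(k+1) ≤ a+1), if_pos (by omega : a+1+(k+1) ≤ a+b+2),
            if_neg (by omega : ¬ a+1+k ≤ a+1), if_pos (by omega : a+1+k ≤ a+b+2)]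
          rw [show a+b+3-(a+1+(k+1)) = b+1-k from by omega,
              show a+b+3-(a+1+k) = b+2-k from by omega,
              show b+1-k+1 = b+2-k from by omega,
              Nat.cast_sub (by omega : k ≤ b+1), Nat.cast_sub (by omega : k ≤ b+2)]
          push_cast
          have hk' : (k:ℝ) ≤ b := by exact_mod_cast Nat.lt_succ_iff.1 hk
          have d1 : (b:ℝ)+2-k ≠ 0 := by linarith
          field_simp
      rw [hstep, sub_self]
      simp
    have s3 : (∑ k ∈ range (c+1), ((c+1-k+1:ℕ):ℝ)/((c+1-k:ℕ):ℝ)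
        * (armW W (a+b+2) (k+1) - ((c+1-k:ℕ):ℝ)/((c+1-k+1:ℕ):ℝ) * armW W (a+b+2) k)^2) = 0 := by
      refine Finset.sum_eq_zero fun k hk => ?_
      rw [mem_range] at hk
      have hstep : armW W (a+b+2) (k+1) = ((c+1-k:ℕ):ℝ)/((c+1-k+1:ℕ):ℝ) * armW W (a+b+2) k := by
        simp only [armW, Nat.succ_ne_zero, if_false]
        by_cases hk0 : k = 0
        · subst hk0
          simp only [if_pos rfl, hW0]
          rw [hW]
          simp only [if_neg (by omega : ¬ a+b+2+1 ≤ a+1), if_neg (by omega : ¬ a+b+2+1 ≤ a+b+2)]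
          rw [Nat.cast_sub (by omega : a+b+2+1 ≤ a+b+c+4)]
          push_cast
          field_simp
          ring
        · rw [if_neg hk0, hW]
          simp only [if_neg (by omega : ¬ a+b+2+(k+1) ≤ a+1), if_neg (by omega : ¬ a+b+2+(k+1) ≤ a+b+2),
            if_neg (by omega : ¬ a+b+2+k ≤ a+1), if_neg (by omega : ¬ a+b+2+k ≤ a+b+2)]
          rw [show a+b+c+4-(a+b+2+(k+1)) = c+1-k from by omega,
              show a+b+c+4-(a+b+2+k) = c+2-k from by omega,
              show c+1-k+1 = c+2-k from by omega,
              Nat.cast_sub (by omega : k ≤ c+1), Nat.cast_sub (by omega : k ≤ c+2)]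
          push_cast
          have hk' : (k:ℝ) ≤ c := by exact_mod_cast Nat.lt_succ_iff.1 hk
          have d1 : (c:ℝ)+2-k ≠ 0 := by linarith
          field_simp
      rw [hstep, sub_self]
      simp
    rw [s1, s2, s3, hW0] at hQ
    norm_num at hQ
    simp only [one_div] at hnot
    linarith
  · -- 1/p+1/q+1/r > 1 → positive definite
    intro hgt v hv
    push_cast at hgt
    set w : ℕ → ℝ := fun k => if h : k < a+2+(b+2)+(c+2)-2 then v ⟨k,h⟩ else 0 with hw
    have hvw : ∀ i : Fin (a+2+(b+2)+(c+2)-2), v i = w ↑i := by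
      intro i
      rw [hw]
      simp only [i.isLt, dif_pos, Fin.eta]
    rw [conv_sum a b c v w hvw, qform]
    have hκ : 0 < (1:ℝ)/((a:ℝ)+2) + 1/((b:ℝ)+2) + 1/((c:ℝ)+2) - 1 := by linarith
    have h1 : 0 ≤ (∑ k ∈ range (a+1), ((a+1-k+1:ℕ):ℝ)/((a+1-k:ℕ):ℝ)
        * (w (k+1) - ((a+1-k:ℕ):ℝ)/((a+1-k+1:ℕ):ℝ) * w k)^2) :=
      Finset.sum_nonneg fun k _ => by positivity
    have h2 : 0 ≤ (∑ k ∈ range (b+1), ((b+1-k+1:ℕ):ℝ)/((b+1-k:ℕ):ℝ)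
        * (armW w (a+1) (k+1) - ((b+1-k:ℕ):ℝ)/((b+1-k+1:ℕ):ℝ) * armW w (a+1) k)^2) :=
      Finset.sum_nonneg fun k _ => by positivity
    have h3 : 0 ≤ (∑ k ∈ range (c+1), ((c+1-k+1:ℕ):ℝ)/((c+1-k:ℕ):ℝ)
        * (armW w (a+b+2) (k+1) - ((c+1-k:ℕ):ℝ)/((c+1-k+1:ℕ):ℝ) * armW w (a+b+2) k)^2) :=
      Finset.sum_nonneg fun k _ => by positivity
    have h4 : 0 ≤ ((1:ℝ)/((a:ℝ)+2) + 1/((b:ℝ)+2) + 1/((c:ℝ)+2) - 1) * (w 0)^2 :=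
      mul_nonneg hκ.le (sq_nonneg _)
    by_contra hle
    push_neg at hle
    have e1 : (∑ k ∈ range (a+1), ((a+1-k+1:ℕ):ℝ)/((a+1-k:ℕ):ℝ)
        * (w (k+1) - ((a+1-k:ℕ):ℝ)/((a+1-k+1:ℕ):ℝ) * w k)^2) = 0 := by linarith
    have e2 : (∑ k ∈ range (b+1), ((b+1-k+1:ℕ):ℝ)/((b+1-k:ℕ):ℝ)
        * (armW w (a+1) (k+1) - ((b+1-k:ℕ):ℝ)/((b+1-k+1:ℕ):ℝ) * armW w (a+1) k)^2) = 0 := by linarith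
    have e3 : (∑ k ∈ range (c+1), ((c+1-k+1:ℕ):ℝ)/((c+1-k:ℕ):ℝ)
        * (armW w (a+b+2) (k+1) - ((c+1-k:ℕ):ℝ)/((c+1-k+1:ℕ):ℝ) * armW w (a+b+2) k)^2) = 0 := by linarith
    have e4 : ((1:ℝ)/((a:ℝ)+2) + 1/((b:ℝ)+2) + 1/((c:ℝ)+2) - 1) * (w 0)^2 = 0 := by linarith
    have hw0 : w 0 = 0 := by
      have := (mul_eq_zero.1 e4).resolve_left (ne_of_gt hκ)
      exact pow_eq_zero_iff (by norm_num) |>.1 this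
    have z1 := arm_zero (a+1) w hw0 e1
    have z2 := arm_zero (b+1) (armW w (a+1)) (by simp [armW, hw0]) e2
    have z3 := arm_zero (c+1) (armW w (a+b+2)) (by simp [armW, hw0]) e3
    apply hv
    funext i
    have hi : (i:ℕ) < a+2+(b+2)+(c+2)-2 := i.isLt
    rw [Pi.zero_apply, hvw i]
    by_cases c1 : (i:ℕ) ≤ a+1
    · exact z1 _ c1
    · by_cases c2 : (i:ℕ) ≤ a+b+2
      · have hz := z2 ((i:ℕ) - (a+1)) (by omega)
        rw [armW, if_neg (by omega : ¬ (i:ℕ) - (a+1) = 0)] at hz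
        rwa [show a+1+((i:ℕ)-(a+1)) = (i:ℕ) from by omega] at hz
      · have hz := z3 ((i:ℕ) - (a+b+2)) (by omega)
        rw [armW, if_neg (by omega : ¬ (i:ℕ) - (a+b+2) = 0)] at hz
        rwa [show a+b+2+((i:ℕ)-(a+b+2)) = (i:ℕ) from by omega] at hz
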